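/- In the Cartesian product P₅ □ P of the path on 5 vertices with the Petersen graph, the radio number equals 126. -/

import Mathlib

open SimpleGraph Finset

/-- The Petersen graph as the Kneser graph K(5,2). -/
def petersen : SimpleGraph {s : Finset (Fin 5) // s.card = 2} where
  Adj a b := Disjoint a.1 b.1
  symm := ⟨fun _ _ h => h.symm⟩
  loopless := ⟨fun a h => by
    have h0 : a.1 = ⊥ := disjoint_self.mp h
    have h2 := a.2
    rw [h0] at h2
    simp at h2⟩

/-- A radio labeling of `G`: for all distinct `u, v`,
`d(u,v) + |φ(u) - φ(v)| ≥ diam(G) + 1`. -/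
def IsRadioLabeling {V : Type*} (G : SimpleGraph V) (φ : V → ℕ) : Prop :=
  ∀ u v : V, u ≠ v → (G.diam : ℤ) + 1 ≤ (G.dist u v : ℤ) + |(φ u : ℤ) - (φ v : ℤ)|

/-- The span of a labeling: the maximum difference between two labels. -/
noncomputable def span {V : Type*} (φ : V → ℕ) : ℕ :=
  sSup (Set.range fun p : V × V => φ p.1 - φ p.2)

/-- The radio number of `G`: the minimum span over all radio labelings. -/
noncomputable def radioNumber {V : Type*} (G : SimpleGraph V) : ℕ :=
  sInf {s | ∃ φ : V → ℕ, IsRadioLabeling G φ ∧ span φ = s}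

/-- `d(v, S)`: the minimum distance from `v` to a vertex of `S`. -/
noncomputable def distToSet {V : Type*} (G : SimpleGraph V) (v : V) (S : Finset V) : ℕ :=
  sInf ((fun w => G.dist v w) '' ↑S)

/-- `diam(S)`: the maximum distance in `G` between two vertices of `S`. -/
noncomputable def setDiam {V : Type*} (G : SimpleGraph V) (S : Finset V) : ℕ :=
  sSup {d | ∃ x ∈ S, ∃ y ∈ S, G.dist x y = d}


abbrev PV := {s : Finset (Fin 5) // s.card = 2}
abbrev V5 := Fin 5 × PV

def pdist (s t : PV) : ℕ := if s = t then 0 else if Disjoint s.1 t.1 then 1 else 2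
def pd (i j : Fin 5) : ℕ := (i.val - j.val) + (j.val - i.val)
def D (u v : V5) : ℕ := pd u.1 v.1 + pdist u.2 v.2

lemma petersen_adj {a b : PV} : petersen.Adj a b ↔ Disjoint a.1 b.1 := Iff.rfl

lemma petersen_common : ∀ a b : PV, a ≠ b → ¬ Disjoint a.1 b.1 →
    ∃ c : PV, Disjoint a.1 c.1 ∧ Disjoint c.1 b.1 := by decide

lemma petersen_preconnected : petersen.Preconnected := by
  intro a b
  by_cases hab : a = b
  · exact hab ▸ Reachable.refl a
  by_cases hd : Disjoint a.1 b.1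
  · exact (petersen_adj.mpr hd).reachable
  · obtain ⟨c, h1, h2⟩ := petersen_common a b hab hd
    exact ((petersen_adj.mpr h1).reachable).trans (petersen_adj.mpr h2).reachable

lemma petersen_connected : petersen.Connected := by
  have : Nonempty PV := ⟨⟨{0,1}, by decide⟩⟩
  exact ⟨petersen_preconnected⟩

lemma petersen_dist (a b : PV) : petersen.dist a b = pdist a b := by
  unfold pdist
  by_cases hab : a = b
  · simp [hab]
  rw [if_neg hab]
  by_cases hd : Disjoint a.1 b.1
  · rw [if_pos hd]
    exact dist_eq_one_iff_adj.mpr (petersen_adj.mpr hd)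
  · rw [if_neg hd]
    obtain ⟨c, h1, h2⟩ := petersen_common a b hab hd
    have hle : petersen.dist a b ≤ 2 := by
      have := dist_le ((Walk.cons (petersen_adj.mpr h1) (Walk.cons (petersen_adj.mpr h2) Walk.nil)) : petersen.Walk a b)
      simpa using this
    have h1' : petersen.dist a b ≠ 1 := by
      intro h
      exact hd (petersen_adj.mp (dist_eq_one_iff_adj.mp h))
    have h0' : petersen.dist a b ≠ 0 := by
      intro h
      exact hab ((petersen_connected.dist_eq_zero_iff).mp h)
    omega

lemma path_conn : (pathGraph 5).Connected := pathGraph_connected 4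


-- lower bound helper: any walk has length ≥ |i - j|
lemma path_walk_len {i j : Fin 5} (w : (pathGraph 5).Walk i j) : pd i j ≤ w.length := by
  induction w with
  | nil => simp [pd]
  | cons h w ih =>
    rename_i a b c
    have : pd a b ≤ 1 := by
      rcases (pathGraph_adj.mp h) with h' | h' <;> simp [pd] <;> omega
    have tri : pd a c ≤ pd a b + pd b c := by unfold pd; omega
    simp only [Walk.length_cons]
    omega

lemma path_dist (i j : Fin 5) : (pathGraph 5).dist i j = pd i j := by
  apply le_antisymm
  · -- upper: build a walk by induction on pd
    have key : ∀ n (i j : Fin 5), pd i j = n → (pathGraph 5).dist i j ≤ n := by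
      intro n
      induction n with
      | zero =>
        intro i j h
        have : i = j := by
          have := i.isLt; have := j.isLt
          unfold pd at h
          exact Fin.ext (by omega)
        simp [this]
      | succ n ih =>
        intro i j h
        -- move one step from i toward j
        by_cases hij : i.val < j.val
        · have hi1 : i.val + 1 < 5 := by omega
          set k : Fin 5 := ⟨i.val + 1, hi1⟩ with hk
          have hadj : (pathGraph 5).Adj i k := pathGraph_adj.mpr (Or.inl rfl)
          have hpd : pd k j = n := by unfold pd at *; simp [hk]; omega
          calc (pathGraph 5).dist i j ≤ (pathGraph 5).dist i k + (pathGraph 5).dist k j :=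
                path_conn.dist_triangle
            _ ≤ 1 + n := by
                have := dist_eq_one_iff_adj.mpr hadj
                have := ih k j hpd
                omega
            _ = n + 1 := by omega
        · have hij' : j.val < i.val := by unfold pd at h; omega
          have hi1 : i.val - 1 < 5 := by omega
          set k : Fin 5 := ⟨i.val - 1, hi1⟩ with hk
          have hadj : (pathGraph 5).Adj i k := pathGraph_adj.mpr (Or.inr (by simp [hk]; omega))
          have hpd : pd k j = n := by unfold pd at *; simp [hk]; omega
          calc (pathGraph 5).dist i j ≤ (pathGraph 5).dist i k + (pathGraph 5).dist k j :=
                path_conn.dist_triangle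
            _ ≤ 1 + n := by
                have := dist_eq_one_iff_adj.mpr hadj
                have := ih k j hpd
                omega
            _ = n + 1 := by omega
    exact key _ i j rfl
  · obtain ⟨w, hw⟩ := (path_conn.preconnected i j).exists_walk_length_eq_dist
    rw [← hw]
    exact path_walk_len w
variable {α β : Type*} {G : SimpleGraph α} {H : SimpleGraph β}

lemma boxProd_walk_le (hG : G.Connected) (hH : H.Connected) :
    ∀ {x y : α × β} (w : (G □ H).Walk x y),
      G.dist x.1 y.1 + H.dist x.2 y.2 ≤ w.length := by
  intro x y w
  induction w with
  | nil => simp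
  | cons h w ih =>
    rename_i a b c
    rcases boxProd_adj.mp h with ⟨hadj, heq⟩ | ⟨hadj, heq⟩
    · have h1 : G.dist a.1 c.1 ≤ 1 + G.dist b.1 c.1 := by
        have := hG.dist_triangle (v := b.1) (u := a.1) (w := c.1)
        have := dist_eq_one_iff_adj.mpr hadj
        omega
      have h2 : H.dist a.2 c.2 = H.dist b.2 c.2 := by rw [heq]
      simp only [Walk.length_cons]
      omega
    · have h1 : H.dist a.2 c.2 ≤ 1 + H.dist b.2 c.2 := by
        have := hH.dist_triangle (v := b.2) (u := a.2) (w := c.2)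
        have := dist_eq_one_iff_adj.mpr hadj
        omega
      have h2 : G.dist a.1 c.1 = G.dist b.1 c.1 := by rw [heq]
      simp only [Walk.length_cons]
      omega

lemma boxProd_dist (hG : G.Connected) (hH : H.Connected) (x y : α × β) :
    (G □ H).dist x y = G.dist x.1 y.1 + H.dist x.2 y.2 := by
  apply le_antisymm
  · obtain ⟨w1, hw1⟩ := hG.exists_walk_length_eq_dist x.1 y.1
    obtain ⟨w2, hw2⟩ := hH.exists_walk_length_eq_dist x.2 y.2
    have := dist_le ((Walk.boxProdLeft (H := H) x.2 w1).append (Walk.boxProdRight (G := G) y.1 w2) : (G □ H).Walk (x.1, x.2) (y.1, y.2))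
    have e1 : (Walk.boxProdLeft (H := H) x.2 w1).length = w1.length := Walk.length_map _ _
    have e2 : (Walk.boxProdRight (G := G) y.1 w2).length = w2.length := Walk.length_map _ _
    rw [Walk.length_append, e1, e2] at this
    simp only [Prod.mk.eta] at this
    omega
  · obtain ⟨w, hw⟩ := ((hG.boxProd hH).preconnected x y).exists_walk_length_eq_dist
    rw [← hw]
    exact boxProd_walk_le hG hH w

def tbl : Nat → Nat → Nat
  | 0, 3 => 94
  | 0, 5 => 81
  | 0, 6 => 42
  | 0, 9 => 107
  | 0, 10 => 68
  | 0, 12 => 29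
  | 0, 17 => 16
  | 0, 18 => 3
  | 0, 20 => 55
  | 0, 24 => 116
  | 1, 3 => 60
  | 1, 5 => 99
  | 1, 6 => 21
  | 1, 9 => 34
  | 1, 10 => 8
  | 1, 12 => 112
  | 1, 17 => 73
  | 1, 18 => 47
  | 1, 20 => 121
  | 1, 24 => 86
  | 2, 3 => 104
  | 2, 5 => 52
  | 2, 6 => 91
  | 2, 9 => 26
  | 2, 10 => 39
  | 2, 12 => 78
  | 2, 17 => 126
  | 2, 18 => 13
  | 2, 20 => 0
  | 2, 24 => 65
  | 3, 3 => 70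
  | 3, 5 => 18
  | 3, 6 => 5
  | 3, 9 => 96
  | 3, 10 => 31
  | 3, 12 => 118
  | 3, 17 => 83
  | 3, 18 => 57
  | 3, 20 => 44
  | 3, 24 => 109
  | 4, 3 => 10
  | 4, 5 => 114
  | 4, 6 => 49
  | 4, 9 => 62
  | 4, 10 => 23
  | 4, 12 => 36
  | 4, 17 => 101
  | 4, 18 => 123
  | 4, 20 => 88
  | 4, 24 => 75
  | _, _ => 0

set_option maxRecDepth 10000 in

set_option maxRecDepth 10000 in
def lab (v : V5) : ℕ := tbl v.1.val (v.2.1.sum fun k => 2 ^ k.val)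

set_option maxRecDepth 100000 in
lemma lab_check : ∀ u v : V5, u ≠ v → 7 ≤ D u v + ((lab u - lab v) + (lab v - lab u)) := by decide
set_option maxRecDepth 100000 in
lemma lab_le : ∀ v : V5, lab v ≤ 126 := by decide
set_option maxRecDepth 100000 in
lemma D_le : ∀ u v : V5, D u v ≤ 6 := by decide
noncomputable abbrev Gr := pathGraph 5 □ petersen

lemma Gr_conn : Gr.Connected := path_conn.boxProd petersen_connected

lemma Gr_dist (u v : V5) : Gr.dist u v = D u v := by
  rw [boxProd_dist path_conn petersen_connected, path_dist, petersen_dist]; rfl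

lemma Gr_edist (u v : V5) : Gr.edist u v = (D u v : ℕ∞) := by
  have hr : Gr.Reachable u v := Gr_conn.preconnected u v
  have hne : Gr.edist u v ≠ ⊤ := edist_ne_top_iff_reachable.mpr hr
  have := Gr_dist u v
  rw [SimpleGraph.dist] at this
  rw [← this, ENat.coe_toNat hne]

lemma Gr_diam : Gr.diam = 6 := by
  have he : Gr.ediam = 6 := by
    apply le_antisymm
    · apply ediam_le_of_edist_le
      intro u v
      rw [Gr_edist]
      exact_mod_cast Nat.cast_le.mpr (D_le u v)
    · have h6 : Gr.edist (⟨0, ⟨{0,1}, by decide⟩⟩ : V5) (⟨4, ⟨{0,2}, by decide⟩⟩ : V5) = 6 := by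
        rw [Gr_edist]
        decide
      calc (6 : ℕ∞) = _ := h6.symm
        _ ≤ Gr.ediam := edist_le_ediam
  rw [SimpleGraph.diam, he]
  rfl

def A (k : Fin 5) : ℤ := |(k.val : ℤ) - 2|

lemma pdcast : ∀ i j : Fin 5, (pd i j : ℤ) = |(i.val : ℤ) - (j.val : ℤ)| := by decide

lemma tri_abs : ∀ i j : Fin 5, |(i.val : ℤ) - (j.val : ℤ)| ≤ A i + A j := by decide

lemma tri_lemma : ∀ x y z : Fin 5, A y = 2 → |(x.val : ℤ) - y.val| = A x + A y →
    |(y.val : ℤ) - z.val| = A y + A z → A x + A z - 1 ≤ |(x.val : ℤ) - z.val| →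
    A x = 0 ∨ A z = 0 := by decide

lemma pdist_le : ∀ s t : PV, (pdist s t : ℤ) ≤ 2 := by
  intro s t
  unfold pdist
  split <;> [skip; split] <;> norm_num

lemma sumA : ∑ v : V5, A v.1 = 60 := by decide

lemma cardA0 : (univ.filter fun v : V5 => A v.1 = 0).card = 10 := by decide
lemma cardA2 : (univ.filter fun v : V5 => A v.1 = 2).card = 20 := by decide

lemma cardV5 : Fintype.card V5 = 50 := by decide

lemma Dcast (u v : V5) : (D u v : ℤ) = |(u.1.val : ℤ) - (v.1.val : ℤ)| + (pdist u.2 v.2 : ℤ) := by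
  unfold D
  push_cast
  rw [pdcast]

theorem lower_main (φ : V5 → ℕ)
    (h7 : ∀ u v : V5, u ≠ v → (7 : ℤ) ≤ (D u v : ℤ) + |(φ u : ℤ) - (φ v : ℤ)|)
    (hD6 : ∀ u v : V5, D u v ≤ 6) :
    ∃ x y : V5, φ y ≤ φ x ∧ 126 ≤ φ x - φ y := by
  have hinj : Function.Injective φ := by
    intro u v h
    by_contra hne
    have h1 := h7 u v hne
    have h2 := hD6 u v
    rw [h, sub_self, abs_zero, add_zero] at h1
    omega
  have hs : (univ.image φ).card = 50 := by
    rw [Finset.card_image_of_injective _ hinj, card_univ, cardV5]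
  set s : Finset ℕ := univ.image φ with hsdef
  let o := s.orderIsoOfFin hs
  have hmem : ∀ i : Fin 50, (o i : ℕ) ∈ s := fun i => (o i).2
  have hex : ∀ i : Fin 50, ∃ v : V5, φ v = (o i : ℕ) := by
    intro i
    obtain ⟨v, _, hv⟩ := Finset.mem_image.mp (hmem i)
    exact ⟨v, hv⟩
  choose u hu using hex
  have humono : ∀ {i j : Fin 50}, i < j → φ (u i) < φ (u j) := by
    intro i j hij
    rw [hu i, hu j]
    exact_mod_cast Subtype.coe_lt_coe.mpr (o.strictMono hij)
  have huinj : Function.Injective u := by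
    intro i j h
    by_contra hne
    rcases lt_or_gt_of_ne hne with h' | h'
    · exact absurd (humono h') (by rw [h]; omega)
    · exact absurd (humono h') (by rw [h]; omega)
  have husurj : Function.Surjective u := by
    have hbij := (Fintype.bijective_iff_injective_and_card u).mpr
      ⟨huinj, by rw [Fintype.card_fin, cardV5]⟩
    exact hbij.2
  set U : ℕ → V5 := fun n => u ⟨min n 49, by omega⟩ with hUdef
  have hUeq : ∀ i : Fin 50, U i.val = u i := by
    intro i
    have hlt := i.isLt
    have : (⟨min i.val 49, by omega⟩ : Fin 50) = i := by
      apply Fin.ext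
      simp
      omega
    simp [hUdef, this]
  have hUmono : ∀ m n : ℕ, m < n → n ≤ 49 → φ (U m) < φ (U n) := by
    intro m n hmn hn
    apply humono
    simp [Fin.lt_def]
    omega
  have hUne : ∀ m n : ℕ, m < n → n ≤ 49 → U m ≠ U n := by
    intro m n hmn hn h
    have := hUmono m n hmn hn
    rw [h] at this
    omega
  set F : ℕ → ℤ := fun n => (φ (U n) : ℤ) with hFdef
  set a : ℕ → ℤ := fun n => A (U n).1 with hadef
  set L : ℕ → ℤ := fun n => ((U n).1.val : ℤ) with hLdef
  set q : ℕ → ℤ := fun n => (pdist (U n).2 (U (n+1)).2 : ℤ) with hqdef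
  have hF7 : ∀ m n : ℕ, m < n → n ≤ 49 →
      (7 : ℤ) ≤ |L m - L n| + (pdist (U m).2 (U n).2 : ℤ) + (F n - F m) := by
    intro m n hmn hn
    have h := h7 (U m) (U n) (hUne m n hmn hn)
    have hlt := hUmono m n hmn hn
    rw [abs_sub_comm, abs_of_nonneg (by simp; omega), Dcast] at h
    have : ((φ (U n) : ℤ) - (φ (U m) : ℤ)) = F n - F m := rfl
    linarith [h]
  have htri : ∀ i : ℕ, |L i - L (i+1)| ≤ a i + a (i+1) :=
    fun i => tri_abs (U i).1 (U (i+1)).1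
  have hq2 : ∀ i : ℕ, q i ≤ 2 := fun i => pdist_le (U i).2 (U (i+1)).2
  have ha_nonneg : ∀ i : ℕ, 0 ≤ a i := fun i => abs_nonneg _
  -- sum of a over range 50 is 60
  have hsum_a : ∑ n ∈ range 50, a n = 60 := by
    have h1 : ∑ n ∈ range 50, a n = ∑ i : Fin 50, A (u i).1 := by
      rw [← Fin.sum_univ_eq_sum_range (fun n => a n) 50]
      apply Finset.sum_congr rfl
      intro i _
      show A (U i.val).1 = A (u i).1
      rw [hUeq i]
    rw [h1, ← sumA]
    exact Fintype.sum_bijective u ⟨huinj, husurj⟩ _ _ (fun i => rfl)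
  have htel : ∑ i ∈ range 49, (F (i+1) - F i) = F 49 - F 0 := Finset.sum_range_sub F 49
  have hshift : ∑ i ∈ range 49, (a i + a (i+1)) = 120 - a 0 - a 49 := by
    have e1 : ∑ i ∈ range 49, a i = 60 - a 49 := by
      have h := Finset.sum_range_succ a 49
      rw [show (49 + 1 : ℕ) = 50 from rfl, hsum_a] at h
      omega
    have e2 : ∑ i ∈ range 49, a (i+1) = 60 - a 0 := by
      have h := Finset.sum_range_succ' a 49
      rw [show (49 + 1 : ℕ) = 50 from rfl, hsum_a] at h
      omega
    rw [Finset.sum_add_distrib, e1, e2]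
    ring
  have hmain : (126 : ℤ) ≤ F 49 - F 0 := by
    by_contra hcon
    push_neg at hcon
    have hS : F 49 - F 0 ≤ 125 := by omega
    set σ : ℕ → ℤ := fun i => (F (i+1) - F i) + ((a i + a (i+1)) - 5) with hσdef
    have hσ_ge : ∀ i : ℕ, i < 49 → 7 ≤ |L i - L (i+1)| + q i + (F (i+1) - F i) := by
      intro i hi
      exact hF7 i (i+1) (by omega) (by omega)
    have hσ_nonneg : ∀ i ∈ range 49, 0 ≤ σ i := by
      intro i hi
      simp only [Finset.mem_range] at hi
      have c1 := hσ_ge i hi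
      have c2 := htri i
      have c3 := hq2 i
      simp only [hσdef]
      linarith
    have hσ_sum : ∑ i ∈ range 49, σ i = (F 49 - F 0) - 125 - a 0 - a 49 := by
      simp only [hσdef]
      rw [Finset.sum_add_distrib, htel, Finset.sum_sub_distrib, hshift,
        Finset.sum_const, Finset.card_range]
      ring
    have ha0 := ha_nonneg 0
    have ha49 := ha_nonneg 49
    have hσsum_nonneg : 0 ≤ ∑ i ∈ range 49, σ i := Finset.sum_nonneg hσ_nonneg
    have ha0z : a 0 = 0 := by omega
    have ha49z : a 49 = 0 := by omega
    have hσzero : ∀ i ∈ range 49, σ i = 0 := by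
      rw [← Finset.sum_eq_zero_iff_of_nonneg hσ_nonneg]
      omega
    have hE : ∀ i, i < 49 →
        (F (i+1) - F i = 7 - (a i + a (i+1)) - 2) ∧
        (|L i - L (i+1)| = a i + a (i+1)) ∧ (q i = 2) := by
      intro i hi
      have hz := hσzero i (Finset.mem_range.mpr hi)
      simp only [hσdef] at hz
      have c1 := hσ_ge i hi
      have c2 := htri i
      have c3 := hq2 i
      refine ⟨by linarith, by linarith, by linarith⟩
    have htriple : ∀ m : ℕ, m + 2 ≤ 49 → a (m+1) = 2 → a m = 0 ∨ a (m+2) = 0 := by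
      intro m hm h2
      obtain ⟨e1, e3, e5⟩ := hE m (by omega)
      obtain ⟨e2, e4, e6⟩ := hE (m+1) (by omega)
      have hf := hF7 m (m+2) (by omega) (by omega)
      have hple : (pdist (U m).2 (U (m+2)).2 : ℤ) ≤ 2 := pdist_le _ _
      have hFF : F (m+2) - F m = (F (m+2) - F (m+1)) + (F (m+1) - F m) := by ring
      have habs : a m + a (m+2) - 1 ≤ |L m - L (m+2)| := by linarith
      exact tri_lemma (U m).1 (U (m+1)).1 (U (m+2)).1 h2 e3 e4 habs
    set Z : Finset ℕ := (range 50).filter (fun n => a n = 0) with hZdef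
    set T : Finset ℕ := (range 50).filter (fun n => a n = 2) with hTdef
    have hfilter_card : ∀ c : ℤ, ((range 50).filter (fun n => a n = c)).card
        = (univ.filter fun v : V5 => A v.1 = c).card := by
      intro c
      apply Finset.card_bij (fun n _ => U n)
      · intro n hn
        simp only [Finset.mem_filter, Finset.mem_range] at hn
        simp only [Finset.mem_filter, Finset.mem_univ, true_and]
        exact hn.2
      · intro m hm n hn h
        simp only [Finset.mem_filter, Finset.mem_range] at hm hn
        have h2 := congrArg Fin.val (huinj h)
        simp at h2
        omega
      · intro v hv
        obtain ⟨i, hi⟩ := husurj v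
        refine ⟨i.val, ?_, ?_⟩
        · simp only [Finset.mem_filter, Finset.mem_range]
          refine ⟨i.isLt, ?_⟩
          simp only [Finset.mem_filter] at hv
          show A (U i.val).1 = c
          rw [hUeq i, hi]
          exact hv.2
        · rw [hUeq i, hi]
    have hZcard : Z.card = 10 := by rw [hZdef, hfilter_card, cardA0]
    have hTcard : T.card = 20 := by rw [hTdef, hfilter_card, cardA2]
    have h0Z : 0 ∈ Z := by
      simp only [hZdef, Finset.mem_filter, Finset.mem_range]
      exact ⟨by omega, ha0z⟩
    have h49Z : 49 ∈ Z := by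
      simp only [hZdef, Finset.mem_filter, Finset.mem_range]
      exact ⟨by omega, ha49z⟩
    set T1 : Finset ℕ := T.filter (fun j => 1 ≤ j ∧ a (j-1) = 0) with hT1def
    set T2 : Finset ℕ := T.filter (fun j => a (j+1) = 0) with hT2def
    have hTsub : T ⊆ T1 ∪ T2 := by
      intro j hj
      have hj' := hj
      simp only [hTdef, Finset.mem_filter, Finset.mem_range] at hj'
      obtain ⟨hj50, hja⟩ := hj'
      have hj0 : j ≠ 0 := by
        intro h
        rw [h, ha0z] at hja
        omega
      have hj49 : j ≠ 49 := by
        intro h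
        rw [h, ha49z] at hja
        omega
      obtain ⟨m, rfl⟩ : ∃ m, j = m + 1 := ⟨j - 1, by omega⟩
      rcases htriple m (by omega) hja with h | h
      · apply Finset.mem_union_left
        simp only [hT1def, Finset.mem_filter]
        exact ⟨hj, by omega, by simpa using h⟩
      · apply Finset.mem_union_right
        simp only [hT2def, Finset.mem_filter]
        exact ⟨hj, h⟩
    have hT1card : T1.card ≤ 9 := by
      have hmaps : ∀ j ∈ T1, j - 1 ∈ Z.erase 49 := by
        intro j hj
        simp only [hT1def, hTdef, Finset.mem_filter, Finset.mem_range] at hj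
        obtain ⟨⟨hj50, hja⟩, hj1, hjz⟩ := hj
        have hj49 : j ≠ 49 := by
          intro h
          rw [h, ha49z] at hja
          omega
        simp only [Finset.mem_erase, hZdef, Finset.mem_filter, Finset.mem_range]
        exact ⟨by omega, by omega, hjz⟩
      have hinjOn : ∀ j ∈ T1, ∀ j' ∈ T1, j - 1 = j' - 1 → j = j' := by
        intro j hj j' hj' h
        simp only [hT1def, Finset.mem_filter] at hj hj'
        omega
      calc T1.card ≤ (Z.erase 49).card := Finset.card_le_card_of_injOn _ hmaps hinjOn
        _ = 9 := by rw [Finset.card_erase_of_mem h49Z, hZcard]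
    have hT2card : T2.card ≤ 9 := by
      have hmaps : ∀ j ∈ T2, j + 1 ∈ Z.erase 0 := by
        intro j hj
        simp only [hT2def, hTdef, Finset.mem_filter, Finset.mem_range] at hj
        obtain ⟨⟨hj50, hja⟩, hjz⟩ := hj
        have hj49 : j ≠ 49 := by
          intro h
          rw [h, ha49z] at hja
          omega
        simp only [Finset.mem_erase, hZdef, Finset.mem_filter, Finset.mem_range]
        exact ⟨by omega, by omega, hjz⟩
      have hinjOn : ∀ j ∈ T2, ∀ j' ∈ T2, j + 1 = j' + 1 → j = j' := by
        intro j _ j' _ h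
        omega
      calc T2.card ≤ (Z.erase 0).card := Finset.card_le_card_of_injOn _ hmaps hinjOn
        _ = 9 := by rw [Finset.card_erase_of_mem h0Z, hZcard]
    have hfin : T.card ≤ T1.card + T2.card :=
      le_trans (Finset.card_le_card hTsub) (Finset.card_union_le T1 T2)
    omega
  refine ⟨U 49, U 0, ?_, ?_⟩
  · have := hUmono 0 49 (by omega) (by omega)
    omega
  · have h1 : (φ (U 49) : ℤ) = F 49 := rfl
    have h2 : (φ (U 0) : ℤ) = F 0 := rfl
    omega

lemma natabs (a b : ℕ) : ((a - b : ℕ) : ℤ) + ((b - a : ℕ) : ℤ) = |(a : ℤ) - (b : ℤ)| := by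
  rcases le_total a b with h | h
  · rw [abs_of_nonpos (by omega)]
    omega
  · rw [abs_of_nonneg (by omega)]
    omega

theorem stmt_18 : radioNumber (pathGraph 5 □ petersen) = 126 := by
  have hdist : ∀ u v : V5, (pathGraph 5 □ petersen).dist u v = D u v := Gr_dist
  have hdiam : (pathGraph 5 □ petersen).diam = 6 := Gr_diam
  have hlabr : IsRadioLabeling (pathGraph 5 □ petersen) lab := by
    intro u v huv
    rw [hdiam, hdist]
    have h := lab_check u v huv
    have h' : ((7:ℕ) : ℤ) ≤ ((D u v + ((lab u - lab v) + (lab v - lab u)) : ℕ) : ℤ) :=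
      Nat.cast_le.mpr h
    rw [Nat.cast_add, Nat.cast_add, natabs] at h'
    push_cast at h' ⊢
    linarith
  have hspan : span lab = 126 := by
    apply IsGreatest.csSup_eq
    constructor
    · refine ⟨(((2 : Fin 5), ⟨{0,4}, by decide⟩), ((2 : Fin 5), ⟨{2,4}, by decide⟩)), ?_⟩
      decide
    · rintro x ⟨p, rfl⟩
      exact le_trans (Nat.sub_le _ _) (lab_le p.1)
  have hmem : (126 : ℕ) ∈ {s | ∃ φ : V5 → ℕ, IsRadioLabeling (pathGraph 5 □ petersen) φ ∧ span φ = s} :=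
    ⟨lab, hlabr, hspan⟩
  have hlb : ∀ t ∈ {s | ∃ φ : V5 → ℕ, IsRadioLabeling (pathGraph 5 □ petersen) φ ∧ span φ = s},
      (126 : ℕ) ≤ t := by
    rintro t ⟨ψ, hψ, rfl⟩
    have h7 : ∀ u v : V5, u ≠ v → (7 : ℤ) ≤ (D u v : ℤ) + |(ψ u : ℤ) - (ψ v : ℤ)| := by
      intro u v h
      have := hψ u v h
      rw [hdiam, hdist] at this
      push_cast at this
      linarith
    obtain ⟨x, y, hxy, h126⟩ := lower_main ψ h7 D_le
    have hbdd : BddAbove (Set.range fun p : V5 × V5 => ψ p.1 - ψ p.2) :=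
      (Set.finite_range _).bddAbove
    have hmem' : ψ x - ψ y ∈ Set.range (fun p : V5 × V5 => ψ p.1 - ψ p.2) := ⟨(x, y), rfl⟩
    exact le_trans h126 (le_csSup hbdd hmem')
  exact le_antisymm (Nat.sInf_le hmem) (le_csInf ⟨126, hmem⟩ hlb)
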